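/- Let ψ: ℝ² → ℝ satisfy: ψ(p) < y⋆ = ψ(p⋆) for all p ≠ p⋆; ‖∇²ψ(p)‖ ≤ c₁ for all p; ∇ψ(p) ≠ 0 for p ≠ p⋆; and ψ⁻¹([y, ∞)) compact for all y ∈ (inf ψ, y⋆). For ε > 0 define V_ε(x) := y⋆ − ψ(p) + ε⟨∇ψ(p), o − o_⊥⟩² on X = ℝ² × S¹, where x = (p, o) and o_⊥ is the positively oriented unit normal to o. Then there exists ε₁ > 0 such that for all ε ∈ (0, ε₁): (i) 0 < V_ε(x) < z⋆ := y⋆ − inf ψ for every x = (p,o) with p ≠ p⋆; and (ii) the sublevel set {x : V_ε(x) ≤ z} is compact for every z ∈ (0, z⋆). -/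

import Mathlib

open Metric
open scoped RealInnerProductSpace

noncomputable section

/-- Rotation by +90°: for `o ∈ S¹`, `perp o` is the unique unit vector such that
`(o, perp o)` is a positively oriented orthonormal basis of `ℝ²`. -/
def perp (o : EuclideanSpace ℝ (Fin 2)) : EuclideanSpace ℝ (Fin 2) :=
  (WithLp.equiv 2 (Fin 2 → ℝ)).symm ![-(o 1), o 0]

/-- The Lyapunov function candidate `V_ε(p, o) = y⋆ − ψ(p) + ε⟨∇ψ(p), o − o_⊥⟩²`. -/
def Vfun (ψ : EuclideanSpace ℝ (Fin 2) → ℝ) (ystar ε : ℝ)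
    (p o : EuclideanSpace ℝ (Fin 2)) : ℝ :=
  ystar - ψ p + ε * (inner ℝ (gradient ψ p) (o - perp o) : ℝ) ^ 2

namespace VAux

local notation "E2" => EuclideanSpace ℝ (Fin 2)

lemma gradient_contDiff {ψ : E2 → ℝ} (hψ : ContDiff ℝ 2 ψ) :
    ContDiff ℝ 1 (fun q => gradient ψ q) := by
  have h1 : ContDiff ℝ 1 (fderiv ℝ ψ) := hψ.fderiv_right (by norm_num)
  exact ((InnerProductSpace.toDual ℝ E2).symm.contDiff).comp h1

lemma gradient_inner {ψ : E2 → ℝ} (hψ : ContDiff ℝ 2 ψ) (p v : E2) :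
    ⟪gradient ψ p, v⟫ = fderiv ℝ ψ p v := by
  simp [gradient, InnerProductSpace.toDual_symm_apply]

lemma grad_lip {ψ : E2 → ℝ} (hψ : ContDiff ℝ 2 ψ) {c₁ : ℝ} (hc₁ : 0 < c₁)
    (hhess : ∀ p, ‖fderiv ℝ (fun q => gradient ψ q) p‖ ≤ c₁) :
    LipschitzWith c₁.toNNReal (fun q => gradient ψ q) := by
  apply lipschitzWith_of_nnnorm_fderiv_le
    ((gradient_contDiff hψ).differentiable one_ne_zero)
  intro x
  rw [← NNReal.coe_le_coe, coe_nnnorm, Real.coe_toNNReal _ hc₁.le]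
  exact hhess x

lemma taylor_bound {ψ : E2 → ℝ} (hψ : ContDiff ℝ 2 ψ) {c₁ : ℝ} (hc₁ : 0 < c₁)
    (hhess : ∀ p, ‖fderiv ℝ (fun q => gradient ψ q) p‖ ≤ c₁) (p v : E2) :
    |ψ (p + v) - ψ p - ⟪gradient ψ p, v⟫| ≤ c₁ / 2 * ‖v‖ ^ 2 := by
  have hdiff : Differentiable ℝ ψ := hψ.differentiable (by norm_num)
  set g' : ℝ → ℝ := fun t => ⟪gradient ψ (p + t • v), v⟫ with hg'
  have hderiv : ∀ t : ℝ, HasDerivAt (fun t : ℝ => ψ (p + t • v)) (g' t) t := by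
    intro t
    have hc : HasDerivAt (fun t : ℝ => p + t • v) v t := by
      simpa using ((hasDerivAt_id t).smul_const v).const_add p
    have h := (hdiff (p + t • v)).hasFDerivAt.comp_hasDerivAt t hc
    simp only [hg']
    rw [gradient_inner hψ]
    simpa [Function.comp_def] using h
  have hgc : Continuous fun q => gradient ψ q := (gradient_contDiff hψ).continuous
  have hg'c : Continuous g' := by
    exact (hgc.comp (by continuity)).inner continuous_const
  have hint : ∫ t in (0:ℝ)..1, g' t = ψ (p + v) - ψ p := by
    have := intervalIntegral.integral_eq_sub_of_hasDerivAt
      (fun t _ => hderiv t) (hg'c.intervalIntegrable 0 1)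
    simpa using this
  have hlip := grad_lip hψ hc₁ hhess
  have key : ψ (p + v) - ψ p - ⟪gradient ψ p, v⟫
      = ∫ t in (0:ℝ)..1, (g' t - g' 0) := by
    rw [intervalIntegral.integral_sub (hg'c.intervalIntegrable 0 1)
      (intervalIntegrable_const), hint]
    simp [hg']
  rw [key]
  have hb : ∀ t ∈ Set.Icc (0:ℝ) 1, |g' t - g' 0| ≤ (c₁ * ‖v‖ ^ 2) * t := by
    intro t ht
    have h1 : g' t - g' 0 = ⟪gradient ψ (p + t • v) - gradient ψ (p + (0:ℝ) • v), v⟫ := by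
      simp [hg', inner_sub_left]
    rw [h1]
    have hcs := abs_real_inner_le_norm (gradient ψ (p + t • v) - gradient ψ (p + (0:ℝ) • v)) v
    have h2 : dist (p + t • v) (p + (0:ℝ) • v) = |t| * ‖v‖ := by
      simp [dist_eq_norm, norm_smul, Real.norm_eq_abs]
    have hl := hlip.dist_le_mul (p + t • v) (p + (0:ℝ) • v)
    rw [h2, Real.coe_toNNReal _ hc₁.le, dist_eq_norm] at hl
    have hvn : (0:ℝ) ≤ ‖v‖ := norm_nonneg v
    rw [abs_of_nonneg ht.1] at hl
    nlinarith [mul_le_mul_of_nonneg_right hl hvn, abs_nonneg (⟪gradient ψ (p + t • v) - gradient ψ (p + (0:ℝ) • v), v⟫ : ℝ),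
      norm_nonneg (gradient ψ (p + t • v) - gradient ψ (p + (0:ℝ) • v))]
  calc |∫ t in (0:ℝ)..1, (g' t - g' 0)|
      ≤ |∫ t in (0:ℝ)..1, (c₁ * ‖v‖ ^ 2) * t| := by
        rw [← Real.norm_eq_abs]
        apply intervalIntegral.norm_integral_le_abs_of_norm_le
        · filter_upwards [MeasureTheory.ae_restrict_mem measurableSet_uIoc] with t ht
          have ht' : t ∈ Set.Icc (0:ℝ) 1 := by
            rcases Set.mem_uIoc.mp ht with h | h
            · exact ⟨le_of_lt h.1, h.2⟩
            · exact absurd h.2 (by norm_num [h.1.le]; linarith [h.1])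
          simpa using hb t ht'
        · exact (continuous_const.mul continuous_id).intervalIntegrable 0 1
      _ = c₁ / 2 * ‖v‖ ^ 2 := by
        rw [intervalIntegral.integral_const_mul, integral_id]
        rw [abs_of_nonneg (by positivity)]
        ring

lemma grad_sq_upper {ψ : E2 → ℝ} (hψ : ContDiff ℝ 2 ψ) {c₁ : ℝ} (hc₁ : 0 < c₁)
    (hhess : ∀ p, ‖fderiv ℝ (fun q => gradient ψ q) p‖ ≤ c₁)
    {M : ℝ} (hM : ∀ q, ψ q ≤ M) (p : E2) :
    ‖gradient ψ p‖ ^ 2 ≤ 2 * c₁ * (M - ψ p) := by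
  have ht := taylor_bound hψ hc₁ hhess p ((1 / c₁) • gradient ψ p)
  rw [abs_le] at ht
  have h1 : ⟪gradient ψ p, (1 / c₁) • gradient ψ p⟫ = (1 / c₁) * ‖gradient ψ p‖ ^ 2 := by
    rw [real_inner_smul_right, real_inner_self_eq_norm_sq]
  have h2 : ‖(1 / c₁) • gradient ψ p‖ ^ 2 = (1 / c₁) ^ 2 * ‖gradient ψ p‖ ^ 2 := by
    rw [norm_smul]; simp [abs_of_pos hc₁]; ring
  have h3 := hM (p + (1 / c₁) • gradient ψ p)
  rw [h1, h2] at ht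
  have hc' : c₁ ≠ 0 := hc₁.ne'
  have e : (1 / c₁) * ‖gradient ψ p‖ ^ 2 - c₁ / 2 * ((1 / c₁) ^ 2 * ‖gradient ψ p‖ ^ 2)
      = ‖gradient ψ p‖ ^ 2 / (2 * c₁) := by field_simp; ring
  have key : ‖gradient ψ p‖ ^ 2 / (2 * c₁) ≤ M - ψ p := by linarith [ht.1]
  rw [div_le_iff₀ (by positivity : (0:ℝ) < 2 * c₁)] at key
  linarith

lemma grad_sq_lower {ψ : E2 → ℝ} (hψ : ContDiff ℝ 2 ψ) {c₁ : ℝ} (hc₁ : 0 < c₁)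
    (hhess : ∀ p, ‖fderiv ℝ (fun q => gradient ψ q) p‖ ≤ c₁)
    {m : ℝ} (hm : ∀ q, m ≤ ψ q) (p : E2) :
    ‖gradient ψ p‖ ^ 2 ≤ 2 * c₁ * (ψ p - m) := by
  have ht := taylor_bound hψ hc₁ hhess p (-((1 / c₁) • gradient ψ p))
  rw [abs_le] at ht
  have h1 : ⟪gradient ψ p, -((1 / c₁) • gradient ψ p)⟫ = -((1 / c₁) * ‖gradient ψ p‖ ^ 2) := by
    rw [inner_neg_right, real_inner_smul_right, real_inner_self_eq_norm_sq]
  have h2 : ‖-((1 / c₁) • gradient ψ p)‖ ^ 2 = (1 / c₁) ^ 2 * ‖gradient ψ p‖ ^ 2 := by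
    rw [norm_neg, norm_smul]; simp [abs_of_pos hc₁]; ring
  have h3 := hm (p + -((1 / c₁) • gradient ψ p))
  rw [h1, h2] at ht
  have hc' : c₁ ≠ 0 := hc₁.ne'
  have e : -((1 / c₁) * ‖gradient ψ p‖ ^ 2) + c₁ / 2 * ((1 / c₁) ^ 2 * ‖gradient ψ p‖ ^ 2)
      = -(‖gradient ψ p‖ ^ 2 / (2 * c₁)) := by field_simp; ring
  have key : ‖gradient ψ p‖ ^ 2 / (2 * c₁) ≤ ψ p - m := by linarith [ht.2]
  rw [div_le_iff₀ (by positivity : (0:ℝ) < 2 * c₁)] at key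
  linarith

lemma perp_apply_zero (o : E2) : perp o 0 = -(o 1) := rfl
lemma perp_apply_one (o : E2) : perp o 1 = o 0 := rfl

lemma inner_perp (o : E2) : ⟪o, perp o⟫ = 0 := by
  rw [PiLp.inner_apply, Fin.sum_univ_two]
  simp [perp_apply_zero, perp_apply_one]
  ring

lemma norm_perp (o : E2) : ‖perp o‖ = ‖o‖ := by
  rw [EuclideanSpace.norm_eq, EuclideanSpace.norm_eq, Fin.sum_univ_two, Fin.sum_univ_two]
  rw [perp_apply_zero, perp_apply_one]
  rw [norm_neg, add_comm]

lemma norm_sub_perp_sq {o : E2} (ho : o ∈ sphere (0 : E2) 1) : ‖o - perp o‖ ^ 2 = 2 := by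
  have hno : ‖o‖ = 1 := by simpa using ho
  rw [@norm_sub_sq_real, inner_perp, norm_perp, hno]
  ring

lemma continuous_perp : Continuous perp := by
  unfold perp
  apply (PiLp.continuous_toLp 2 (fun _ : Fin 2 => ℝ)).comp
  refine continuous_pi fun i => ?_
  have h0 : Continuous fun o : E2 => o 0 := (EuclideanSpace.proj (0 : Fin 2)).continuous
  have h1 : Continuous fun o : E2 => o 1 := (EuclideanSpace.proj (1 : Fin 2)).continuous
  fin_cases i
  · simp only [Fin.zero_eta, Fin.isValue, Matrix.cons_val_zero]; exact h1.neg
  · simpa using h0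

lemma continuous_Vfun {ψ : E2 → ℝ} (hψ : ContDiff ℝ 2 ψ) (ystar ε : ℝ) :
    Continuous fun x : E2 × E2 => Vfun ψ ystar ε x.1 x.2 := by
  have hgc : Continuous fun q => gradient ψ q := (gradient_contDiff hψ).continuous
  have hψc : Continuous ψ := hψ.continuous
  unfold Vfun
  apply Continuous.add
  · exact continuous_const.sub (hψc.comp continuous_fst)
  · apply continuous_const.mul
    apply Continuous.pow
    exact (hgc.comp continuous_fst).inner
      (continuous_snd.sub (continuous_perp.comp continuous_snd))

end VAux

open VAux

/-- Lemma 1: properties of the Lyapunov function candidate `V_ε` on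
`X = ℝ² × S¹` for small `ε`. -/
theorem Vfun_positive_and_sublevel_compact
    (ψ : EuclideanSpace ℝ (Fin 2) → ℝ) (hψ : ContDiff ℝ 2 ψ)
    (pstar : EuclideanSpace ℝ (Fin 2)) (c₁ : ℝ) (hc₁ : 0 < c₁)
    (hmax : ∀ p, p ≠ pstar → ψ p < ψ pstar)
    (hhess : ∀ p, ‖fderiv ℝ (fun q => gradient ψ q) p‖ ≤ c₁)
    (hgrad : ∀ p, p ≠ pstar → gradient ψ p ≠ 0)
    (hlevel : ∀ y : ℝ, (∃ p, ψ p < y) → y < ψ pstar → IsCompact {p | y ≤ ψ p}) :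
    ∃ ε₁ : ℝ, 0 < ε₁ ∧ ∀ ε : ℝ, 0 < ε → ε < ε₁ →
      (∀ p o, o ∈ sphere (0 : EuclideanSpace ℝ (Fin 2)) 1 → p ≠ pstar →
        0 < Vfun ψ (ψ pstar) ε p o ∧
        ((Vfun ψ (ψ pstar) ε p o : EReal) < (ψ pstar : EReal) - ⨅ q, (ψ q : EReal))) ∧
      (∀ z : ℝ, 0 < z → ((z : EReal) < (ψ pstar : EReal) - ⨅ q, (ψ q : EReal)) →
        IsCompact {x : EuclideanSpace ℝ (Fin 2) × EuclideanSpace ℝ (Fin 2) |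
          x.2 ∈ sphere (0 : EuclideanSpace ℝ (Fin 2)) 1 ∧
          Vfun ψ (ψ pstar) ε x.1 x.2 ≤ z}) := by
  refine ⟨1 / (8 * c₁), by positivity, fun ε hε hε₁ => ?_⟩
  have hεc : 4 * c₁ * ε < 1 := by
    rw [lt_div_iff₀ (by positivity)] at hε₁
    nlinarith
  constructor
  · intro p o ho hp
    have hpos : 0 < Vfun ψ (ψ pstar) ε p o := by
      have h1 := hmax p hp
      have h2 := sq_nonneg (inner ℝ (gradient ψ p) (o - perp o) : ℝ)
      unfold Vfun
      nlinarith
    refine ⟨hpos, ?_⟩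
    by_cases hbot : (⨅ q, (ψ q : EReal)) = ⊥
    · rw [hbot, EReal.coe_sub_bot]
      exact EReal.coe_lt_top _
    · have hItop : (⨅ q, (ψ q : EReal)) ≠ ⊤ :=
        ((iInf_le (fun q => (ψ q : EReal)) pstar).trans_lt (EReal.coe_lt_top _)).ne
      obtain ⟨m, hm⟩ : ∃ m : ℝ, (⨅ q, (ψ q : EReal)) = (m : EReal) := by
        lift (⨅ q, (ψ q : EReal)) to ℝ using ⟨hItop, hbot⟩ with m hm
        exact ⟨m, rfl⟩
      have hmle : ∀ q, m ≤ ψ q := fun q => by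
        have : (m : EReal) ≤ (ψ q : EReal) := hm ▸ iInf_le (fun q => (ψ q : EReal)) q
        exact_mod_cast this
      have hgl := grad_sq_lower hψ hc₁ hhess hmle p
      have hmlt : m < ψ p := by
        rcases lt_or_eq_of_le (hmle p) with h | h
        · exact h
        · exfalso
          apply hgrad p hp
          have h0 : ‖gradient ψ p‖ ^ 2 = 0 :=
            le_antisymm (by nlinarith) (sq_nonneg _)
          exact norm_eq_zero.mp (by exact pow_eq_zero_iff two_ne_zero |>.mp h0)
      have hcs : (inner ℝ (gradient ψ p) (o - perp o) : ℝ) ^ 2 ≤ 2 * ‖gradient ψ p‖ ^ 2 := by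
        have h1 := abs_real_inner_le_norm (gradient ψ p) (o - perp o)
        have h2 := norm_sub_perp_sq ho
        have h3 := abs_nonneg (inner ℝ (gradient ψ p) (o - perp o) : ℝ)
        nlinarith [sq_abs (inner ℝ (gradient ψ p) (o - perp o) : ℝ),
          norm_nonneg (gradient ψ p), norm_nonneg (o - perp o)]
      have hlt : Vfun ψ (ψ pstar) ε p o < ψ pstar - m := by
        unfold Vfun
        nlinarith [hmax p hp]
      rw [hm, ← EReal.coe_sub]
      exact_mod_cast hlt
  · intro z hz0 hz
    set y : ℝ := ψ pstar - z with hy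
    have hIy : (⨅ q, (ψ q : EReal)) < ((y : ℝ) : EReal) := by
      by_cases hbot : (⨅ q, (ψ q : EReal)) = ⊥
      · rw [hbot]; exact EReal.bot_lt_coe _
      · have hItop : (⨅ q, (ψ q : EReal)) ≠ ⊤ :=
          ((iInf_le (fun q => (ψ q : EReal)) pstar).trans_lt (EReal.coe_lt_top _)).ne
        obtain ⟨m, hm⟩ : ∃ m : ℝ, (⨅ q, (ψ q : EReal)) = (m : EReal) := by
          lift (⨅ q, (ψ q : EReal)) to ℝ using ⟨hItop, hbot⟩ with m hm
          exact ⟨m, rfl⟩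
        rw [hm, ← EReal.coe_sub] at hz
        have : z < ψ pstar - m := by exact_mod_cast hz
        rw [hm]
        exact_mod_cast (by linarith : m < y)
    obtain ⟨q, hq⟩ := iInf_lt_iff.mp hIy
    have hq' : ψ q < y := by exact_mod_cast hq
    have hK := hlevel y ⟨q, hq'⟩ (by rw [hy]; linarith)
    have hKS : IsCompact (({p | y ≤ ψ p} : Set (EuclideanSpace ℝ (Fin 2))) ×ˢ
        sphere (0 : EuclideanSpace ℝ (Fin 2)) 1) := hK.prod (isCompact_sphere 0 1)
    apply hKS.of_isClosed_subset
    · have h1 : IsClosed {x : EuclideanSpace ℝ (Fin 2) × EuclideanSpace ℝ (Fin 2) |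
          x.2 ∈ sphere (0 : EuclideanSpace ℝ (Fin 2)) 1} :=
        isClosed_sphere.preimage continuous_snd
      have h2 : IsClosed {x : EuclideanSpace ℝ (Fin 2) × EuclideanSpace ℝ (Fin 2) |
          Vfun ψ (ψ pstar) ε x.1 x.2 ≤ z} :=
        isClosed_le (continuous_Vfun hψ _ _) continuous_const
      rw [show {x : EuclideanSpace ℝ (Fin 2) × EuclideanSpace ℝ (Fin 2) |
          x.2 ∈ sphere (0 : EuclideanSpace ℝ (Fin 2)) 1 ∧
          Vfun ψ (ψ pstar) ε x.1 x.2 ≤ z} = _ ∩ _ from Set.setOf_and]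
      exact h1.inter h2
    · rintro ⟨p, o⟩ ⟨hx1, hx2⟩
      refine ⟨?_, hx1⟩
      show y ≤ ψ p
      have h2 := sq_nonneg (inner ℝ (gradient ψ p) (o - perp o) : ℝ)
      unfold Vfun at hx2
      rw [hy]
      nlinarith
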